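/- Let A be an associative ring and define Δ_i(a₁,…,a_i) = Σ_{σ ∈ S_i} sgn(σ)·a_{σ(1)}⋯a_{σ(i)}. For any positive integers k, ℓ and elements a₁,…,a_{2k+2ℓ} ∈ A, the alternating insertion of Δ_{2ℓ} into the first slot of Δ_{2k+1}, summed with signs over all permutations of the 2k+2ℓ arguments and divided by (2k)!·(2ℓ)!, equals Δ_{2k+2ℓ}(a₁,…,a_{2k+2ℓ}). -/

import Mathlib

/-- The fully alternated product of `n` elements of an associative ring. -/
def altProd {A : Type*} [Ring A] {n : ℕ} (a : Fin n → A) : A :=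
  ∑ σ : Equiv.Perm (Fin n), (Equiv.Perm.sign σ : ℤ) • (List.ofFn (fun i => a (σ i))).prod

open Equiv Equiv.Perm Fin List

namespace AltAux

theorem ofFn_prod_three {M : Type*} [Monoid M] (p nm r : ℕ) (f : Fin (p + (nm + r)) → M) :
    (List.ofFn f).prod =
      (List.ofFn fun i : Fin p => f (Fin.castAdd (nm + r) i)).prod *
        ((List.ofFn fun i : Fin nm => f (Fin.natAdd p (Fin.castAdd r i))).prod *
          (List.ofFn fun j : Fin r => f (Fin.natAdd p (Fin.natAdd nm j))).prod) := by
  rw [List.ofFn_add, List.prod_append]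
  congr 1
  rw [List.ofFn_add (f := fun j : Fin (nm + r) => f (Fin.natAdd p j)), List.prod_append]
  rfl

@[simp] theorem fin_cast_self {mm : ℕ} (h : mm = mm) (x : Fin mm) : Fin.cast h x = x := rfl

/-- the cycle used to delete position `q` -/
def Cq (k : ℕ) (hk : 0 < k) (q : Fin (2*k+1)) : Perm (Fin (2*k)) :=
  (finCongr (show 2*k-1+1 = 2*k by omega)).permCongr
    (Fin.cycleRange ⟨q.1-1, by have := q.isLt; omega⟩)

def tsig (k : ℕ) (hk : 0 < k) (q : Fin (2*k+1)) (g : Perm (Fin (2*k))) : Perm (Fin (2*k)) :=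
  g * (Cq k hk q)⁻¹

def sigE (k : ℕ) (q : Fin (2*k+1)) (g : Perm (Fin (2*k))) : Perm (Fin (2*k+1)) :=
  (Equiv.Perm.decomposeFin.symm (q, g⁻¹))⁻¹

theorem sigE_zero (k : ℕ) (q : Fin (2*k+1)) (g : Perm (Fin (2*k))) : sigE k q g q = 0 := by
  have h := Equiv.Perm.decomposeFin_symm_apply_zero q g⁻¹
  apply Equiv.injective (Equiv.Perm.decomposeFin.symm (q, g⁻¹))
  rw [h]
  exact Equiv.apply_symm_apply _ _

theorem sigE_swap (k : ℕ) (q : Fin (2*k+1)) (g : Perm (Fin (2*k))) (j : Fin (2*k)) :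
    sigE k q g (Equiv.swap 0 q j.succ) = (g j).succ := by
  have h := Equiv.Perm.decomposeFin_symm_apply_succ g⁻¹ q (g j)
  rw [show g⁻¹ (g j) = j from g.symm_apply_apply j] at h
  apply Equiv.injective (Equiv.Perm.decomposeFin.symm (q, g⁻¹))
  rw [h]
  exact Equiv.apply_symm_apply _ _

/-- Master lemma: values of `sigE` away from `q`. -/
theorem sigE_apply (k : ℕ) (hk : 0 < k) (q : Fin (2*k+1)) (g : Perm (Fin (2*k)))
    (u : Fin (2*k)) (t : Fin (2*k+1))
    (ht : (t : ℕ) = if u.1 < q.1 then u.1 else u.1 + 1) :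
    sigE k q g t = (tsig k hk q g u).succ := by
  set y : Fin (2*k) := (Cq k hk q)⁻¹ u with hy
  have hCy : Cq k hk q y = u := Equiv.apply_symm_apply _ _
  have htsig : tsig k hk q g u = g y := rfl
  have hCval : (Cq k hk q y : ℕ)
      = ((Fin.cycleRange (⟨q.1-1, by have := q.isLt; omega⟩ : Fin (2*k-1+1)))
          ⟨y.1, by have := y.isLt; omega⟩ : ℕ) := rfl
  rw [htsig, ← sigE_swap k q g y]
  congr 1
  -- show : t = swap 0 q y.succ
  by_cases hq0 : q.1 = 0
  · have hq : q = 0 := Fin.ext hq0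
    have hpp0 : (⟨q.1-1, by have := q.isLt; omega⟩ : Fin (2*k-1+1)) = 0 :=
      Fin.ext (by simp [hq0])
    have hCyy : (Cq k hk q y : ℕ) = y.1 := by
      rw [hCval, hpp0, Fin.cycleRange_zero]; rfl
    have hu : u.1 = y.1 := by rw [← hCy]; exact hCyy
    have htv : (t : ℕ) = y.1 + 1 := by rw [ht, hu]; simp [hq0]
    rw [hq, Equiv.swap_self]
    exact Fin.ext (by simpa using htv)
  · have hq1 : 1 ≤ q.1 := Nat.pos_of_ne_zero hq0
    rcases lt_trichotomy y.1 (q.1 - 1) with h | h | h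
    · have hv : (Cq k hk q y : ℕ) = y.1 + 1 := by
        rw [hCval, Fin.coe_cycleRange_of_le (by simp [Fin.le_def]; omega)]
        rw [if_neg (by simp [Fin.ext_iff]; omega)]
      have hu : u.1 = y.1 + 1 := by rw [← hCy]; exact hv
      have htv : (t : ℕ) = y.1 + 1 := by rw [ht, hu, if_pos (by omega)]
      rw [Equiv.swap_apply_of_ne_of_ne
        (show Fin.succ y ≠ 0 from Fin.succ_ne_zero y)
        (show Fin.succ y ≠ q by simp [Fin.ext_iff, Fin.val_succ]; omega)]
      exact Fin.ext (by simpa using htv)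
    · have hv : (Cq k hk q y : ℕ) = 0 := by
        rw [hCval, Fin.coe_cycleRange_of_le (by simp [Fin.le_def]; omega)]
        rw [if_pos (by simp [Fin.ext_iff]; omega)]
      have hu : u.1 = 0 := by rw [← hCy]; exact hv
      have htv : (t : ℕ) = 0 := by rw [ht, hu, if_pos (by omega)]
      have hys : y.succ = q := Fin.ext (by simp [Fin.val_succ]; omega)
      rw [hys, Equiv.swap_apply_right]
      exact Fin.ext (by simpa using htv)
    · have hv : (Cq k hk q y : ℕ) = y.1 := by
        rw [hCval, Fin.cycleRange_of_gt (by simp [Fin.lt_def]; omega)]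
      have hu : u.1 = y.1 := by rw [← hCy]; exact hv
      have htv : (t : ℕ) = y.1 + 1 := by rw [ht, hu, if_neg (by omega)]
      rw [Equiv.swap_apply_of_ne_of_ne
        (show Fin.succ y ≠ 0 from Fin.succ_ne_zero y)
        (show Fin.succ y ≠ q by simp [Fin.ext_iff, Fin.val_succ]; omega)]
      exact Fin.ext (by simpa using htv)


theorem hsplit (k ℓ : ℕ) (q : Fin (2*k+1)) : q.1 + (2*ℓ + (2*k - q.1)) = 2*k+2*ℓ := by
  have := q.isLt; omega

theorem hq2 (k : ℕ) (q : Fin (2*k+1)) : q.1 + (2*k - q.1) = 2*k := by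
  have := q.isLt; omega

def cP (k ℓ : ℕ) (hk : 0 < k) (q : Fin (2*k+1)) (g : Perm (Fin (2*k)))
    (ρ : Perm (Fin (2*ℓ))) : Perm (Fin (2*k+2*ℓ)) :=
  (finCongr (hsplit k ℓ q)).symm.trans <|
   finSumFinEquiv.symm.trans <|
   (Equiv.sumCongr (Equiv.refl (Fin q.1)) finSumFinEquiv.symm).trans <|
   (Equiv.sumAssoc (Fin q.1) (Fin (2*ℓ)) (Fin (2*k-q.1))).symm.trans <|
   (Equiv.sumCongr (Equiv.sumComm (Fin q.1) (Fin (2*ℓ))) (Equiv.refl (Fin (2*k-q.1)))).trans <|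
   (Equiv.sumAssoc (Fin (2*ℓ)) (Fin q.1) (Fin (2*k-q.1))).trans <|
   (Equiv.sumCongr (Equiv.refl (Fin (2*ℓ))) (finSumFinEquiv.trans (finCongr (hq2 k q)))).trans <|
   (Equiv.sumCongr ρ (tsig k hk q g)).trans <|
   (finSumFinEquiv.trans (finCongr (by omega : 2*ℓ+2*k = 2*k+2*ℓ)))

theorem bndA (k ℓ : ℕ) (x : Fin (2*k)) : 2*ℓ + x.1 < 2*k+2*ℓ := by
  have := x.isLt; omega

theorem bndF (k : ℕ) (q : Fin (2*k+1)) (i : Fin q.1) : i.1 < 2*k := by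
  have := i.isLt; have := q.isLt; omega

theorem cP_front (k ℓ : ℕ) (hk : 0 < k) (q : Fin (2*k+1)) (g : Perm (Fin (2*k)))
    (ρ : Perm (Fin (2*ℓ))) (h : q.1 + (2*ℓ + (2*k - q.1)) = 2*k+2*ℓ) (i : Fin q.1) :
    cP k ℓ hk q g ρ (Fin.cast h (Fin.castAdd (2*ℓ + (2*k - q.1)) i))
      = ⟨2*ℓ + (tsig k hk q g ⟨i.1, bndF k q i⟩ : ℕ), bndA k ℓ _⟩ := by
  unfold cP
  simp only [Equiv.trans_apply, finCongr_symm, finCongr_apply, Fin.cast_cast, fin_cast_self,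
    finSumFinEquiv_symm_apply_castAdd, finSumFinEquiv_symm_apply_natAdd,
    Equiv.sumCongr_apply, Equiv.coe_refl, Sum.map_inl, Sum.map_inr, id_eq,
    Equiv.sumAssoc_symm_apply_inl, Equiv.sumAssoc_apply_inl_inl, Equiv.sumAssoc_apply_inl_inr,
    Equiv.sumAssoc_apply_inr, Equiv.sumComm_apply, Sum.swap_inl, Sum.swap_inr,
    finSumFinEquiv_apply_left, finSumFinEquiv_apply_right]
  rfl

end AltAux

namespace AltAux

theorem bndM (k ℓ : ℕ) (x : Fin (2*ℓ)) : x.1 < 2*k+2*ℓ := by have := x.isLt; omega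

theorem bndB (k : ℕ) (q : Fin (2*k+1)) (j : Fin (2*k - q.1)) : q.1 + j.1 < 2*k := by
  have := j.isLt; have := q.isLt; omega

theorem cP_mid (k ℓ : ℕ) (hk : 0 < k) (q : Fin (2*k+1)) (g : Perm (Fin (2*k)))
    (ρ : Perm (Fin (2*ℓ))) (h : q.1 + (2*ℓ + (2*k - q.1)) = 2*k+2*ℓ) (x : Fin (2*ℓ)) :
    cP k ℓ hk q g ρ (Fin.cast h (Fin.natAdd q.1 (Fin.castAdd (2*k - q.1) x)))
      = ⟨(ρ x : ℕ), bndM k ℓ _⟩ := by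
  unfold cP
  simp only [Equiv.trans_apply, finCongr_symm, finCongr_apply, Fin.cast_cast, fin_cast_self,
    finSumFinEquiv_symm_apply_castAdd, finSumFinEquiv_symm_apply_natAdd,
    Equiv.sumCongr_apply, Equiv.coe_refl, Sum.map_inl, Sum.map_inr, id_eq,
    Equiv.sumAssoc_symm_apply_inl, Equiv.sumAssoc_symm_apply_inr_inl,
    Equiv.sumAssoc_symm_apply_inr_inr,
    Equiv.sumAssoc_apply_inl_inl, Equiv.sumAssoc_apply_inl_inr,
    Equiv.sumAssoc_apply_inr, Equiv.sumComm_apply, Sum.swap_inl, Sum.swap_inr,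
    finSumFinEquiv_apply_left, finSumFinEquiv_apply_right]
  rfl

theorem cP_back (k ℓ : ℕ) (hk : 0 < k) (q : Fin (2*k+1)) (g : Perm (Fin (2*k)))
    (ρ : Perm (Fin (2*ℓ))) (h : q.1 + (2*ℓ + (2*k - q.1)) = 2*k+2*ℓ) (j : Fin (2*k - q.1)) :
    cP k ℓ hk q g ρ (Fin.cast h (Fin.natAdd q.1 (Fin.natAdd (2*ℓ) j)))
      = ⟨2*ℓ + (tsig k hk q g ⟨q.1 + j.1, bndB k q j⟩ : ℕ), bndA k ℓ _⟩ := by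
  unfold cP
  simp only [Equiv.trans_apply, finCongr_symm, finCongr_apply, Fin.cast_cast, fin_cast_self,
    finSumFinEquiv_symm_apply_castAdd, finSumFinEquiv_symm_apply_natAdd,
    Equiv.sumCongr_apply, Equiv.coe_refl, Sum.map_inl, Sum.map_inr, id_eq,
    Equiv.sumAssoc_symm_apply_inl, Equiv.sumAssoc_symm_apply_inr_inl,
    Equiv.sumAssoc_symm_apply_inr_inr,
    Equiv.sumAssoc_apply_inl_inl, Equiv.sumAssoc_apply_inl_inr,
    Equiv.sumAssoc_apply_inr, Equiv.sumComm_apply, Sum.swap_inl, Sum.swap_inr,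
    finSumFinEquiv_apply_left, finSumFinEquiv_apply_right]
  rfl

end AltAux

namespace AltAux

theorem finRotate_pow_val {M : ℕ} (hM : 0 < M) (j : ℕ) (x : Fin M) :
    (((finRotate M)^j) x : ℕ) = (x.1 + j) % M := by
  obtain ⟨M', rfl⟩ : ∃ M', M = M' + 1 := ⟨M - 1, by omega⟩
  induction j with
  | zero => simp [Nat.mod_eq_of_lt x.isLt]
  | succ j ih =>
    rw [pow_succ', Perm.mul_apply, finRotate_succ_apply, Fin.val_add, ih, Fin.val_one']
    rw [← Nat.add_mod, ← Nat.add_assoc]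

def GG (k ℓ : ℕ) (q : Fin (2*k+1)) : (Fin (q.1 + 2*ℓ) ⊕ Fin (2*k - q.1)) ≃ Fin (2*k+2*ℓ) :=
  finSumFinEquiv.trans (finCongr (by have := q.isLt; omega))

def RR (k ℓ : ℕ) (q : Fin (2*k+1)) : Perm (Fin (q.1 + 2*ℓ)) :=
  (finRotate (q.1 + 2*ℓ))^(2*ℓ)

def BB (k ℓ : ℕ) (q : Fin (2*k+1)) : Perm (Fin (2*k+2*ℓ)) :=
  (finCongr (hsplit k ℓ q)).symm.trans <|
   finSumFinEquiv.symm.trans <|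
   (Equiv.sumCongr (Equiv.refl (Fin q.1)) finSumFinEquiv.symm).trans <|
   (Equiv.sumAssoc (Fin q.1) (Fin (2*ℓ)) (Fin (2*k-q.1))).symm.trans <|
   (Equiv.sumCongr (Equiv.sumComm (Fin q.1) (Fin (2*ℓ))) (Equiv.refl (Fin (2*k-q.1)))).trans <|
   (Equiv.sumAssoc (Fin (2*ℓ)) (Fin q.1) (Fin (2*k-q.1))).trans <|
   (Equiv.sumCongr (Equiv.refl (Fin (2*ℓ))) (finSumFinEquiv.trans (finCongr (hq2 k q)))).trans <|
   (finSumFinEquiv.trans (finCongr (by omega : 2*ℓ+2*k = 2*k+2*ℓ)))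

theorem BB_front (k ℓ : ℕ) (q : Fin (2*k+1))
    (h : q.1 + (2*ℓ + (2*k - q.1)) = 2*k+2*ℓ) (i : Fin q.1) :
    BB k ℓ q (Fin.cast h (Fin.castAdd (2*ℓ + (2*k - q.1)) i))
      = ⟨2*ℓ + i.1, by have := i.isLt; have := q.isLt; omega⟩ := by
  unfold BB
  simp only [Equiv.trans_apply, finCongr_symm, finCongr_apply, Fin.cast_cast, fin_cast_self,
    finSumFinEquiv_symm_apply_castAdd, finSumFinEquiv_symm_apply_natAdd,
    Equiv.sumCongr_apply, Equiv.coe_refl, Sum.map_inl, Sum.map_inr, id_eq,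
    Equiv.sumAssoc_symm_apply_inl, Equiv.sumAssoc_symm_apply_inr_inl,
    Equiv.sumAssoc_symm_apply_inr_inr,
    Equiv.sumAssoc_apply_inl_inl, Equiv.sumAssoc_apply_inl_inr,
    Equiv.sumAssoc_apply_inr, Equiv.sumComm_apply, Sum.swap_inl, Sum.swap_inr,
    finSumFinEquiv_apply_left, finSumFinEquiv_apply_right]
  rfl

theorem BB_mid (k ℓ : ℕ) (q : Fin (2*k+1))
    (h : q.1 + (2*ℓ + (2*k - q.1)) = 2*k+2*ℓ) (x : Fin (2*ℓ)) :
    BB k ℓ q (Fin.cast h (Fin.natAdd q.1 (Fin.castAdd (2*k - q.1) x)))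
      = ⟨x.1, bndM k ℓ x⟩ := by
  unfold BB
  simp only [Equiv.trans_apply, finCongr_symm, finCongr_apply, Fin.cast_cast, fin_cast_self,
    finSumFinEquiv_symm_apply_castAdd, finSumFinEquiv_symm_apply_natAdd,
    Equiv.sumCongr_apply, Equiv.coe_refl, Sum.map_inl, Sum.map_inr, id_eq,
    Equiv.sumAssoc_symm_apply_inl, Equiv.sumAssoc_symm_apply_inr_inl,
    Equiv.sumAssoc_symm_apply_inr_inr,
    Equiv.sumAssoc_apply_inl_inl, Equiv.sumAssoc_apply_inl_inr,
    Equiv.sumAssoc_apply_inr, Equiv.sumComm_apply, Sum.swap_inl, Sum.swap_inr,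
    finSumFinEquiv_apply_left, finSumFinEquiv_apply_right]
  rfl

theorem BB_back (k ℓ : ℕ) (q : Fin (2*k+1))
    (h : q.1 + (2*ℓ + (2*k - q.1)) = 2*k+2*ℓ) (j : Fin (2*k - q.1)) :
    BB k ℓ q (Fin.cast h (Fin.natAdd q.1 (Fin.natAdd (2*ℓ) j)))
      = ⟨2*ℓ + (q.1 + j.1), by have := bndB k q j; omega⟩ := by
  unfold BB
  simp only [Equiv.trans_apply, finCongr_symm, finCongr_apply, Fin.cast_cast, fin_cast_self,
    finSumFinEquiv_symm_apply_castAdd, finSumFinEquiv_symm_apply_natAdd,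
    Equiv.sumCongr_apply, Equiv.coe_refl, Sum.map_inl, Sum.map_inr, id_eq,
    Equiv.sumAssoc_symm_apply_inl, Equiv.sumAssoc_symm_apply_inr_inl,
    Equiv.sumAssoc_symm_apply_inr_inr,
    Equiv.sumAssoc_apply_inl_inl, Equiv.sumAssoc_apply_inl_inr,
    Equiv.sumAssoc_apply_inr, Equiv.sumComm_apply, Sum.swap_inl, Sum.swap_inr,
    finSumFinEquiv_apply_left, finSumFinEquiv_apply_right]
  rfl

end AltAux

namespace AltAux

theorem BB_decomp (k ℓ : ℕ) (hl : 0 < ℓ) (q : Fin (2*k+1)) :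
    BB k ℓ q = (GG k ℓ q).permCongr (Equiv.sumCongr (RR k ℓ q) (Equiv.refl (Fin (2*k - q.1)))) := by
  have hql : q.1 ≤ 2*k := by have := q.isLt; omega
  have hpos : 0 < q.1 + 2*ℓ := by omega
  have key : ∀ y, BB k ℓ q (GG k ℓ q y)
      = GG k ℓ q (Equiv.sumCongr (RR k ℓ q) (Equiv.refl (Fin (2*k - q.1))) y) := by
    intro y
    rcases y with z | j
    · refine Fin.addCases (fun i => ?_) (fun x => ?_) z
      · -- z = castAdd (2ℓ) i
        have hpt : GG k ℓ q (Sum.inl (Fin.castAdd (2*ℓ) i))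
            = Fin.cast (hsplit k ℓ q) (Fin.castAdd (2*ℓ + (2*k - q.1)) i) := by
          simp [GG, Equiv.trans_apply, finCongr_apply]
          exact Fin.ext (by simp)
        rw [hpt, BB_front]
        have hr : ((RR k ℓ q (Fin.castAdd (2*ℓ) i)) : ℕ) = 2*ℓ + i.1 := by
          rw [RR, finRotate_pow_val hpos]
          simp only [Fin.coe_castAdd]
          rw [Nat.mod_eq_of_lt (by have := i.isLt; omega)]
          omega
        simp only [Equiv.sumCongr_apply, Sum.map_inl]
        apply Fin.ext
        simp [GG, Equiv.trans_apply, finCongr_apply, hr]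
      · -- z = natAdd q.1 x
        have hpt : GG k ℓ q (Sum.inl (Fin.natAdd q.1 x))
            = Fin.cast (hsplit k ℓ q) (Fin.natAdd q.1 (Fin.castAdd (2*k - q.1) x)) := by
          exact Fin.ext (by simp [GG, Equiv.trans_apply, finCongr_apply])
        rw [hpt, BB_mid]
        have hr : ((RR k ℓ q (Fin.natAdd q.1 x)) : ℕ) = x.1 := by
          rw [RR, finRotate_pow_val hpos]
          simp only [Fin.coe_natAdd]
          rw [show q.1 + x.1 + 2*ℓ = x.1 + (q.1 + 2*ℓ) by omega, Nat.add_mod_right]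
          exact Nat.mod_eq_of_lt (by have := x.isLt; omega)
        simp only [Equiv.sumCongr_apply, Sum.map_inl]
        apply Fin.ext
        simp [GG, Equiv.trans_apply, finCongr_apply, hr]
    · -- inr j
      have hpt : GG k ℓ q (Sum.inr j)
          = Fin.cast (hsplit k ℓ q) (Fin.natAdd q.1 (Fin.natAdd (2*ℓ) j)) := by
        exact Fin.ext (by simp [GG, Equiv.trans_apply, finCongr_apply]; omega)
      rw [hpt, BB_back]
      simp only [Equiv.sumCongr_apply, Sum.map_inr, id_eq]
      apply Fin.ext
      simp [GG, Equiv.trans_apply, finCongr_apply]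
      omega
  apply Equiv.ext
  intro x
  have := key ((GG k ℓ q).symm x)
  rw [Equiv.apply_symm_apply] at this
  rw [this, Equiv.permCongr_apply]

theorem sign_BB (k ℓ : ℕ) (hl : 0 < ℓ) (q : Fin (2*k+1)) :
    Perm.sign (BB k ℓ q) = 1 := by
  rw [BB_decomp k ℓ hl q, Equiv.Perm.sign_permCongr, Equiv.Perm.sign_sumCongr,
    Equiv.Perm.sign_refl, mul_one, RR]
  rcases Nat.exists_eq_add_of_lt (show 0 < q.1 + 2*ℓ by omega) with ⟨M, hM⟩
  rw [map_pow]
  generalize hh : Perm.sign (finRotate (q.1 + 2*ℓ)) = s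
  rw [pow_mul]
  have : s^2 = 1 := Int.units_sq s
  rw [this, one_pow]

end AltAux

namespace AltAux

def FF (k ℓ : ℕ) : (Fin (2*ℓ) ⊕ Fin (2*k)) ≃ Fin (2*k+2*ℓ) :=
  finSumFinEquiv.trans (finCongr (by omega : 2*ℓ+2*k = 2*k+2*ℓ))

theorem cP_decomp (k ℓ : ℕ) (hk : 0 < k) (q : Fin (2*k+1)) (g : Perm (Fin (2*k)))
    (ρ : Perm (Fin (2*ℓ))) :
    cP k ℓ hk q g ρ
      = ((FF k ℓ).permCongr (Equiv.sumCongr ρ (tsig k hk q g))) * BB k ℓ q := by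
  apply Equiv.ext
  intro x
  simp only [cP, BB, FF, Perm.mul_apply, Equiv.trans_apply, Equiv.permCongr_apply,
    Equiv.symm_trans_apply, finCongr_symm, finCongr_apply, Fin.cast_cast, fin_cast_self,
    Equiv.symm_apply_apply]

theorem sign_tsig (k : ℕ) (hk : 0 < k) (q : Fin (2*k+1)) (g : Perm (Fin (2*k))) :
    Perm.sign (tsig k hk q g) = Perm.sign g * (-1)^(q.1-1) := by
  rw [tsig, Cq, map_mul, Equiv.Perm.sign_inv, Equiv.Perm.sign_permCongr, Fin.sign_cycleRange]

theorem sign_sigE (k : ℕ) (q : Fin (2*k+1)) (g : Perm (Fin (2*k))) :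
    Perm.sign (sigE k q g) = (if q = 0 then 1 else -1) * Perm.sign g := by
  rw [sigE, Equiv.Perm.sign_inv, Equiv.Perm.decomposeFin.symm_sign, Equiv.Perm.sign_inv]

theorem sign_total (k ℓ : ℕ) (hk : 0 < k) (hl : 0 < ℓ) (q : Fin (2*k+1))
    (g : Perm (Fin (2*k))) (ρ : Perm (Fin (2*ℓ))) :
    (Perm.sign (sigE k q g) : ℤ) * (Perm.sign ρ : ℤ) * (Perm.sign (cP k ℓ hk q g ρ) : ℤ)
      = (-1)^(q.1) := by
  have h1 : ∀ u : ℤˣ, (u:ℤ) * (u:ℤ) = 1 := fun u => by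
    rw [← Units.val_mul, Int.units_mul_self, Units.val_one]
  have h2 := h1 (Perm.sign g)
  have h3 := h1 (Perm.sign ρ)
  rw [cP_decomp k ℓ hk q g ρ, map_mul, Equiv.Perm.sign_permCongr, Equiv.Perm.sign_sumCongr,
    sign_BB k ℓ hl q, mul_one, sign_tsig, sign_sigE]
  by_cases hq : q = 0
  · rw [if_pos hq, hq]
    simp only [Fin.val_zero, Nat.zero_sub, pow_zero, one_mul, mul_one, Units.val_mul]
    calc (Perm.sign g : ℤ) * (Perm.sign ρ : ℤ) * ((Perm.sign ρ : ℤ) * (Perm.sign g : ℤ))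
        = ((Perm.sign g : ℤ) * (Perm.sign g : ℤ)) * ((Perm.sign ρ : ℤ) * (Perm.sign ρ : ℤ)) := by
          ring
    _ = 1 := by rw [h2, h3, mul_one]
  · rw [if_neg hq]
    have hq0 : q.1 ≠ 0 := fun h => hq (Fin.ext h)
    have hqs : q.1 - 1 + 1 = q.1 := by omega
    simp only [Units.val_mul, Units.val_neg, Units.val_one, Units.val_pow_eq_pow_val]
    calc -1 * (Perm.sign g : ℤ) * (Perm.sign ρ : ℤ)
          * ((Perm.sign ρ : ℤ) * ((Perm.sign g : ℤ) * (-1:ℤ)^(q.1-1)))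
        = ((Perm.sign g : ℤ) * (Perm.sign g : ℤ)) * ((Perm.sign ρ : ℤ) * (Perm.sign ρ : ℤ))
            * ((-1:ℤ)^(q.1-1) * (-1:ℤ)^1) := by ring
    _ = (-1:ℤ)^(q.1-1+1) := by rw [h2, h3, ← pow_add]; ring
    _ = (-1:ℤ)^(q.1) := by rw [hqs]

end AltAux


namespace AltAux

def EE (k : ℕ) : (Fin (2*k+1) × Perm (Fin (2*k))) ≃ Perm (Fin (2*k+1)) where
  toFun x := sigE k x.1 x.2
  invFun σ := ((Equiv.Perm.decomposeFin σ⁻¹).1, ((Equiv.Perm.decomposeFin σ⁻¹).2)⁻¹)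
  left_inv := fun x => by simp [sigE]
  right_inv := fun σ => by simp [sigE]

theorem ofFn_one {A : Type*} [Monoid A] (f : Fin 1 → A) : (List.ofFn f).prod = f 0 := by
  simp

theorem inner_expand (k ℓ : ℕ) (hk : 0 < k) (hl : 0 < ℓ) {A : Type*} [Ring A]
    (v : Fin (2*k+2*ℓ) → A) (b : Fin (2*k+1) → A)
    (hb0 : ∀ t : Fin (2*k+1), t.1 = 0 →
      b t = altProd (fun i : Fin (2*ℓ) => v ⟨i.1, bndM k ℓ i⟩))
    (hbs : ∀ t : Fin (2*k+1), t.1 ≠ 0 →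
      b t = v ⟨2*ℓ + t.1 - 1, by have := t.isLt; omega⟩)
    (q : Fin (2*k+1)) (g : Perm (Fin (2*k))) :
    (List.ofFn fun t => b (sigE k q g t)).prod
      = ∑ ρ : Perm (Fin (2*ℓ)), (Perm.sign ρ : ℤ) •
          (List.ofFn fun t => v (cP k ℓ hk q g ρ t)).prod := by
  have h21 : 2*k+1 = q.1 + (1 + (2*k - q.1)) := by have := q.isLt; omega
  set F : A := (List.ofFn (fun i : Fin q.1 =>
      v ⟨2*ℓ + (tsig k hk q g ⟨i.1, bndF k q i⟩ : ℕ), bndA k ℓ _⟩)).prod with hF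
  set Bk : A := (List.ofFn (fun j : Fin (2*k - q.1) =>
      v ⟨2*ℓ + (tsig k hk q g ⟨q.1 + j.1, bndB k q j⟩ : ℕ), bndA k ℓ _⟩)).prod with hBk
  have hfr : (fun i : Fin q.1 =>
        b (sigE k q g (Fin.cast h21.symm (Fin.castAdd (1 + (2*k - q.1)) i))))
      = fun i : Fin q.1 =>
        v ⟨2*ℓ + (tsig k hk q g ⟨i.1, bndF k q i⟩ : ℕ), bndA k ℓ _⟩ := by
    funext i
    have hs : sigE k q g (Fin.cast h21.symm
        (Fin.castAdd (1 + (2*k - q.1)) i)) = (tsig k hk q g ⟨i.1, bndF k q i⟩).succ :=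
      sigE_apply k hk q g _ _ (by simp [i.isLt])
    rw [hs, hbs _ (by simp [Fin.val_succ])]
    exact congrArg v (Fin.ext (by simp [Fin.val_succ]))
  have hbk : (fun j : Fin (2*k - q.1) =>
        b (sigE k q g (Fin.cast h21.symm (Fin.natAdd q.1 (Fin.natAdd 1 j)))))
      = fun j : Fin (2*k - q.1) =>
        v ⟨2*ℓ + (tsig k hk q g ⟨q.1 + j.1, bndB k q j⟩ : ℕ), bndA k ℓ _⟩ := by
    funext j
    have hs : sigE k q g (Fin.cast h21.symm (Fin.natAdd q.1 (Fin.natAdd 1 j)))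
        = (tsig k hk q g ⟨q.1 + j.1, bndB k q j⟩).succ := by
      refine sigE_apply k hk q g _ _ ?_
      simp only [Fin.coe_cast, Fin.coe_natAdd]
      rw [if_neg (by omega)]
      omega
    rw [hs, hbs _ (by simp [Fin.val_succ])]
    exact congrArg v (Fin.ext (by simp [Fin.val_succ]))
  have hmd : (fun i : Fin 1 =>
        b (sigE k q g (Fin.cast h21.symm (Fin.natAdd q.1 (Fin.castAdd (2*k - q.1) i)))))
      = fun _ : Fin 1 => altProd (fun i : Fin (2*ℓ) => v ⟨i.1, bndM k ℓ i⟩) := by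
    funext i
    have hq : (Fin.cast h21.symm (Fin.natAdd q.1 (Fin.castAdd (2*k - q.1) i))) = q := by
      have : i.1 = 0 := by omega
      exact Fin.ext (by simp [this])
    rw [hq, sigE_zero, hb0 _ rfl]
  have step1 : (List.ofFn fun t => b (sigE k q g t)).prod
      = F * ((altProd (fun i : Fin (2*ℓ) => v ⟨i.1, bndM k ℓ i⟩)) * Bk) := by
    calc (List.ofFn fun t => b (sigE k q g t)).prod
        = (List.ofFn fun i : Fin (q.1 + (1 + (2*k - q.1))) =>
            b (sigE k q g (Fin.cast h21.symm i))).prod :=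
          congrArg List.prod (List.ofFn_congr h21 _)
      _ = _ := by
          rw [ofFn_prod_three, hfr, hbk, hmd, ofFn_one]
  rw [step1, altProd, Finset.sum_mul, Finset.mul_sum]
  refine Finset.sum_congr rfl (fun ρ _ => ?_)
  rw [smul_mul_assoc, mul_smul_comm]
  congr 1
  have e1 : (List.ofFn fun t => v (cP k ℓ hk q g ρ t)).prod
      = (List.ofFn fun i : Fin q.1 =>
          v (cP k ℓ hk q g ρ (Fin.cast (hsplit k ℓ q).symm.symm
            (Fin.castAdd (2*ℓ + (2*k - q.1)) i)))).prod *
        ((List.ofFn fun x : Fin (2*ℓ) =>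
          v (cP k ℓ hk q g ρ (Fin.cast (hsplit k ℓ q).symm.symm
            (Fin.natAdd q.1 (Fin.castAdd (2*k - q.1) x))))).prod *
         (List.ofFn fun j : Fin (2*k - q.1) =>
          v (cP k ℓ hk q g ρ (Fin.cast (hsplit k ℓ q).symm.symm
            (Fin.natAdd q.1 (Fin.natAdd (2*ℓ) j))))).prod) := by
    calc (List.ofFn fun t => v (cP k ℓ hk q g ρ t)).prod
        = (List.ofFn fun i : Fin (q.1 + (2*ℓ + (2*k - q.1))) =>
            v (cP k ℓ hk q g ρ (Fin.cast (hsplit k ℓ q).symm.symm i))).prod :=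
          congrArg List.prod (List.ofFn_congr (hsplit k ℓ q).symm _)
      _ = _ := ofFn_prod_three _ _ _ _
  rw [e1]
  congr 1
  · refine congrArg List.prod (congrArg List.ofFn (funext fun i => ?_))
    rw [cP_front]
  congr 1
  · refine congrArg List.prod (congrArg List.ofFn (funext fun x => ?_))
    rw [cP_mid]
  · refine congrArg List.prod (congrArg List.ofFn (funext fun j => ?_))
    rw [cP_back]

end AltAux

namespace AltAux

theorem alt_sum (k : ℕ) : ∑ q : Fin (2*k+1), ((-1:ℤ))^(q.1) = 1 := by
  rw [Fin.sum_univ_eq_sum_range (fun i => ((-1:ℤ))^i)]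
  induction k with
  | zero => simp
  | succ k ih =>
    have h : 2*(k+1)+1 = (2*k+1) + 1 + 1 := by ring
    rw [h, Finset.sum_range_succ, Finset.sum_range_succ, ih]
    have h1 : ((-1:ℤ))^(2*k+1) = -1 := Odd.neg_one_pow ⟨k, by ring⟩
    have h2 : ((-1:ℤ))^(2*k+1+1) = 1 := Even.neg_one_pow ⟨k+1, by ring⟩
    rw [h1, h2]; ring

theorem tau_sum {A : Type*} [Ring A] (k ℓ : ℕ) (hk : 0 < k) (hl : 0 < ℓ)
    (a : Fin (2*k+2*ℓ) → A) (q : Fin (2*k+1)) (g : Perm (Fin (2*k))) (ρ : Perm (Fin (2*ℓ))) :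
    ∑ τ : Perm (Fin (2*k+2*ℓ)),
      ((Perm.sign τ : ℤ) * ((Perm.sign (sigE k q g) : ℤ) * (Perm.sign ρ : ℤ))) •
        (List.ofFn fun t => a (τ (cP k ℓ hk q g ρ t))).prod
      = ((-1:ℤ)^(q.1)) • altProd a := by
  have htot := sign_total k ℓ hk hl q g ρ
  set c := cP k ℓ hk q g ρ with hc
  have hc2 : (Perm.sign c : ℤ) * (Perm.sign c : ℤ) = 1 := by
    rw [← Units.val_mul, Int.units_mul_self, Units.val_one]
  have h' : (Perm.sign (sigE k q g) : ℤ) * (Perm.sign ρ : ℤ)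
      = (-1:ℤ)^(q.1) * (Perm.sign c : ℤ) := by
    calc (Perm.sign (sigE k q g) : ℤ) * (Perm.sign ρ : ℤ)
        = ((Perm.sign (sigE k q g) : ℤ) * (Perm.sign ρ : ℤ) * (Perm.sign c : ℤ))
          * (Perm.sign c : ℤ) := by rw [mul_assoc, hc2, mul_one]
      _ = _ := by rw [htot]
  rw [altProd, Finset.smul_sum]
  refine Fintype.sum_equiv (Equiv.mulRight c) _ _ (fun τ => ?_)
  rw [smul_smul]
  have happ : (fun t => a (τ (c t))) = fun t => a ((Equiv.mulRight c τ) t) := by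
    funext t; simp [Equiv.Perm.mul_apply]
  rw [happ]
  congr 1
  have hsgn : (Perm.sign (Equiv.mulRight c τ) : ℤ) = (Perm.sign τ : ℤ) * (Perm.sign c : ℤ) := by
    have : Equiv.mulRight c τ = τ * c := rfl
    rw [this, map_mul, Units.val_mul]
  rw [hsgn, h']
  ring

end AltAux

/-- `Δ_{2k+1}[Δ_{2ℓ}] = Δ_{2k+2ℓ}`: the alternating insertion of `Δ_{2ℓ}` into the
first slot of `Δ_{2k+1}`, summed with signs over all permutations of the
`2k+2ℓ` arguments and divided by `(2k)!·(2ℓ)!`, equals `Δ_{2k+2ℓ}`. -/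
theorem altProd_odd_even_comp {A : Type*} [Ring A] [Algebra ℚ A]
    (k ℓ : ℕ) (hk : 0 < k) (hl : 0 < ℓ) (a : Fin (2 * k + 2 * ℓ) → A) :
    (((2 * k).factorial * (2 * ℓ).factorial : ℚ)⁻¹) •
      ∑ τ : Equiv.Perm (Fin (2 * k + 2 * ℓ)), (Equiv.Perm.sign τ : ℤ) •
        altProd (fun j : Fin (2 * k + 1) =>
          if (j : ℕ) = 0 then
            altProd (fun i : Fin (2 * ℓ) => a (τ ⟨(i : ℕ), by omega⟩))
          else a (τ ⟨2 * ℓ + (j : ℕ) - 1, by omega⟩))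
    = altProd a := by
  classical
  have key : ∀ τ : Perm (Fin (2*k + 2*ℓ)),
      altProd (fun j : Fin (2 * k + 1) =>
          if (j : ℕ) = 0 then
            altProd (fun i : Fin (2 * ℓ) => a (τ ⟨(i : ℕ), by omega⟩))
          else a (τ ⟨2 * ℓ + (j : ℕ) - 1, by omega⟩))
      = ∑ p : Fin (2*k+1) × Perm (Fin (2*k)), (Perm.sign (AltAux.sigE k p.1 p.2) : ℤ) •
          ∑ ρ : Perm (Fin (2*ℓ)), (Perm.sign ρ : ℤ) •
            (List.ofFn fun t => a (τ (AltAux.cP k ℓ hk p.1 p.2 ρ t))).prod := by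
    intro τ
    rw [altProd]
    refine (Fintype.sum_equiv (AltAux.EE k) _ _ (fun p => ?_)).symm
    have hEE : AltAux.EE k p = AltAux.sigE k p.1 p.2 := rfl
    rw [hEE]
    congr 1
    exact (AltAux.inner_expand k ℓ hk hl (fun x => a (τ x))
      (fun j : Fin (2*k+1) => if (j:ℕ) = 0 then
          altProd (fun i : Fin (2*ℓ) => a (τ ⟨(i:ℕ), by omega⟩))
        else a (τ ⟨2*ℓ + (j:ℕ) - 1, by omega⟩))
      (fun t ht => if_pos ht)
      (fun t ht => if_neg ht)
      p.1 p.2).symm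
  have main : (∑ τ : Equiv.Perm (Fin (2 * k + 2 * ℓ)), (Equiv.Perm.sign τ : ℤ) •
      altProd (fun j : Fin (2 * k + 1) =>
        if (j : ℕ) = 0 then
          altProd (fun i : Fin (2 * ℓ) => a (τ ⟨(i : ℕ), by omega⟩))
        else a (τ ⟨2 * ℓ + (j : ℕ) - 1, by omega⟩)))
      = (((2*k).factorial * (2*ℓ).factorial : ℤ)) • altProd a := by
    calc (∑ τ : Equiv.Perm (Fin (2 * k + 2 * ℓ)), (Equiv.Perm.sign τ : ℤ) •
        altProd (fun j : Fin (2 * k + 1) =>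
          if (j : ℕ) = 0 then
            altProd (fun i : Fin (2 * ℓ) => a (τ ⟨(i : ℕ), by omega⟩))
          else a (τ ⟨2 * ℓ + (j : ℕ) - 1, by omega⟩)))
        = ∑ τ : Perm (Fin (2*k+2*ℓ)), ∑ p : Fin (2*k+1) × Perm (Fin (2*k)),
            ∑ ρ : Perm (Fin (2*ℓ)),
            ((Perm.sign τ : ℤ) * ((Perm.sign (AltAux.sigE k p.1 p.2) : ℤ) * (Perm.sign ρ : ℤ))) •
              (List.ofFn fun t => a (τ (AltAux.cP k ℓ hk p.1 p.2 ρ t))).prod := by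
          refine Finset.sum_congr rfl fun τ _ => ?_
          rw [key τ, Finset.smul_sum]
          refine Finset.sum_congr rfl fun p _ => ?_
          rw [smul_smul, Finset.smul_sum]
          refine Finset.sum_congr rfl fun ρ _ => ?_
          rw [smul_smul, mul_assoc]
      _ = ∑ p : Fin (2*k+1) × Perm (Fin (2*k)), ∑ ρ : Perm (Fin (2*ℓ)),
            ∑ τ : Perm (Fin (2*k+2*ℓ)),
            ((Perm.sign τ : ℤ) * ((Perm.sign (AltAux.sigE k p.1 p.2) : ℤ) * (Perm.sign ρ : ℤ))) •
              (List.ofFn fun t => a (τ (AltAux.cP k ℓ hk p.1 p.2 ρ t))).prod := by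
          rw [Finset.sum_comm]
          exact Finset.sum_congr rfl fun p _ => Finset.sum_comm
      _ = ∑ p : Fin (2*k+1) × Perm (Fin (2*k)), ∑ _ρ : Perm (Fin (2*ℓ)),
            ((-1:ℤ)^(p.1.1)) • altProd a := by
          refine Finset.sum_congr rfl fun p _ => Finset.sum_congr rfl fun ρ _ => ?_
          exact AltAux.tau_sum k ℓ hk hl a p.1 p.2 ρ
      _ = ∑ q : Fin (2*k+1), ∑ _g : Perm (Fin (2*k)), ∑ _ρ : Perm (Fin (2*ℓ)),
            ((-1:ℤ)^(q.1)) • altProd a := by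
          rw [Fintype.sum_prod_type]
      _ = ∑ q : Fin (2*k+1),
            ((((2*k).factorial * (2*ℓ).factorial : ℤ)) * (-1:ℤ)^(q.1)) • altProd a := by
          refine Finset.sum_congr rfl fun q _ => ?_
          rw [Finset.sum_const, Finset.sum_const]
          simp only [Finset.card_univ, Fintype.card_perm, Fintype.card_fin]
          rw [← natCast_zsmul ((-1:ℤ)^(q.1) • altProd a) ((2*ℓ).factorial),
            ← natCast_zsmul _ ((2*k).factorial), smul_smul, smul_smul]
      _ = (((2*k).factorial * (2*ℓ).factorial : ℤ)) • altProd a := by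
          rw [← Finset.sum_smul, ← Finset.mul_sum, AltAux.alt_sum, mul_one]
  rw [main, ← Int.cast_smul_eq_zsmul ℚ, smul_smul]
  have hcast : ((((2*k).factorial * (2*ℓ).factorial : ℤ)) : ℚ)
      = ((2*k).factorial : ℚ) * ((2*ℓ).factorial : ℚ) := by push_cast; ring
  rw [hcast, inv_mul_cancel₀ (mul_ne_zero
    (Nat.cast_ne_zero.mpr (Nat.factorial_ne_zero _))
    (Nat.cast_ne_zero.mpr (Nat.factorial_ne_zero _))), one_smul]
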